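/- Let λ be a partition of n. Then dim S^λ = ∏_{p prime, r ≥ 1} p^{⌊n/p^r⌋ - wt_{p^r}(λ)}, where dim S^λ = n! / ∏_{c ∈ cells(λ)} h_c is given by the hook length formula. -/

import Mathlib

/-- Beta-set (first-column hook lengths with padding) of a partition given as a
weakly decreasing list of parts: `b_i = λ_i + (r - 1 - i)` (0-indexed). -/
def betaSet (L : List ℕ) : List ℕ :=
  (List.range L.length).map (fun i => L.getD i 0 + (L.length - 1 - i))

/-- The `l`-weight of a partition: the number of rim `l`-hooks removed to reach
the `l`-core, computed on the `l`-abacus as the total number of single-runner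
moves needed to push all beads up. -/
def lWeight (l : ℕ) (L : List ℕ) : ℕ :=
  ((betaSet L).map (· / l)).sum -
    ∑ j ∈ Finset.range l, (((betaSet L).filter (fun b => b % l = j)).length).choose 2

/-- Beta-set of the `l`-core: on each runner, push all beads to the lowest positions. -/
def lCoreBeta (l : ℕ) (L : List ℕ) : List ℕ :=
  (List.range l).flatMap (fun j =>
    (List.range (((betaSet L).filter (fun b => b % l = j)).length)).map (fun k => j + l * k))

/-- The `l`-core of a partition, recovered from the pushed-up beta-set. -/
def lCore (l : ℕ) (L : List ℕ) : List ℕ :=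
  (((lCoreBeta l L).mergeSort (fun a b => b ≤ a)).mapIdx
    (fun i b => b - (L.length - 1 - i))).filter (fun a => 0 < a)

/-- Hook length of the cell in row `i`, column `j` (both 0-indexed):
arm + leg + 1. -/
def hookLen (L : List ℕ) (i j : ℕ) : ℕ :=
  (L.getD i 0 - j) + ((L.drop (i + 1)).filter (fun a => j < a)).length

section HookAux
open Finset

lemma listFilterCard (L : List ℕ) (p : ℕ → Bool) :
    (L.filter p).length = ((Finset.range L.length).filter (fun i => p (L.getD i 0))).card := by
  induction L with
  | nil => simp
  | cons a L ih =>
    rw [Finset.card_filter] at *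
    rw [List.filter_cons]
    simp only [List.length_cons, Finset.sum_range_succ']
    simp only [List.getD_cons_succ, List.getD_cons_zero]
    split <;> simp_all [← List.countP_eq_length_filter, List.countP_cons]

def bfun (L : List ℕ) (i : ℕ) : ℕ := L.getD i 0 + (L.length - 1 - i)

def mfun (L : List ℕ) (j : ℕ) : ℕ :=
  ((Finset.range L.length).filter (fun k => j < L.getD k 0)).card

lemma lam_anti {L : List ℕ} (hsorted : L.Pairwise (· ≥ ·)) {i k : ℕ} (hik : i ≤ k)
    (hk : k < L.length) : L.getD k 0 ≤ L.getD i 0 := by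
  rcases Nat.eq_or_lt_of_le hik with rfl | h
  · exact le_rfl
  · rw [L.getD_eq_getElem 0 hk, L.getD_eq_getElem 0 (lt_trans h hk)]
    exact hsorted.rel_get_of_lt (a := ⟨i, lt_trans h hk⟩) (b := ⟨k, hk⟩) h

lemma lam_pos {L : List ℕ} (hpos : ∀ a ∈ L, 0 < a) {i : ℕ} (hi : i < L.length) :
    0 < L.getD i 0 := by
  rw [L.getD_eq_getElem 0 hi]; exact hpos _ (L.getElem_mem hi)

lemma bfun_anti {L : List ℕ} (hsorted : L.Pairwise (· ≥ ·)) {i k : ℕ} (hik : i < k)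
    (hk : k < L.length) : bfun L k < bfun L i := by
  have h1 := lam_anti hsorted (le_of_lt hik) hk
  unfold bfun; omega

lemma mfun_le (L : List ℕ) (j : ℕ) : mfun L j ≤ L.length :=
  le_trans (Finset.card_filter_le _ _) (by simp)

lemma mfun_iff {L : List ℕ} (hsorted : L.Pairwise (· ≥ ·)) {k j : ℕ} (hk : k < L.length) :
    j < L.getD k 0 ↔ k < mfun L j := by
  constructor
  · intro h
    have hsub : Finset.range (k+1) ⊆ (Finset.range L.length).filter
        (fun k' => j < L.getD k' 0) := by
      intro x hx
      simp only [Finset.mem_range] at hx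
      simp only [Finset.mem_filter, Finset.mem_range]
      have hxk : x ≤ k := Nat.lt_succ_iff.mp hx
      exact ⟨lt_of_le_of_lt hxk hk, lt_of_lt_of_le h (lam_anti hsorted hxk hk)⟩
    have := Finset.card_le_card hsub
    simpa [mfun] using this
  · intro h
    by_contra hc
    push_neg at hc
    have hsub : (Finset.range L.length).filter (fun k' => j < L.getD k' 0) ⊆
        Finset.range k := by
      intro x hx
      simp only [Finset.mem_filter, Finset.mem_range] at hx ⊢
      by_contra hxk
      push_neg at hxk
      exact absurd (lt_of_lt_of_le hx.2 (lam_anti hsorted hxk hx.1)) (by omega)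
    have := Finset.card_le_card hsub
    simp only [Finset.card_range] at this
    exact absurd h (by unfold mfun; omega)

lemma getD_drop' (L : List ℕ) (i k : ℕ) (h : i + 1 + k < L.length) :
    (L.drop (i+1)).getD k 0 = L.getD (i+1+k) 0 := by
  rw [L.getD_eq_getElem 0 h, (L.drop (i+1)).getD_eq_getElem 0
    (by rw [List.length_drop]; omega)]
  simp

lemma dropFilterCard (L : List ℕ) (i : ℕ) (p : ℕ → Bool) :
    ((L.drop (i+1)).filter p).length =
      ((Finset.Ioo i L.length).filter (fun k => p (L.getD k 0))).card := by
  rw [listFilterCard, List.length_drop]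
  have himg : (Finset.Ioo i L.length).filter (fun k => p (L.getD k 0)) =
      ((Finset.range (L.length - (i+1))).filter
        (fun k => p ((L.drop (i+1)).getD k 0))).image (fun k => i+1+k) := by
    ext x
    simp only [Finset.mem_filter, Finset.mem_Ioo, Finset.mem_image, Finset.mem_range]
    constructor
    · rintro ⟨⟨h1, h2⟩, h3⟩
      refine ⟨x - (i+1), ⟨by omega, ?_⟩, by omega⟩
      rw [getD_drop' L i _ (by omega)]
      have hx : i + 1 + (x - (i+1)) = x := by omega
      rw [hx]; exact h3
    · rintro ⟨a, ⟨ha, hpa⟩, rfl⟩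
      rw [getD_drop' L i a (by omega)] at hpa
      exact ⟨⟨by omega, by omega⟩, hpa⟩
  rw [himg, Finset.card_image_of_injective _ (fun a b h => by omega)]

lemma hookLen_eq (L : List ℕ) (i j : ℕ) :
    hookLen L i j = (L.getD i 0 - j) +
      ((Finset.Ioo i L.length).filter (fun k => j < L.getD k 0)).card := by
  unfold hookLen
  rw [dropFilterCard]
  simp

lemma mfun_split {L : List ℕ} (hsorted : L.Pairwise (· ≥ ·)) {i j : ℕ} (hi : i < L.length)
    (hj : j < L.getD i 0) :
    mfun L j = (i+1) + ((Finset.Ioo i L.length).filter (fun k => j < L.getD k 0)).card := by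
  have hsplit : Finset.range L.length = Finset.range (i+1) ∪ Finset.Ioo i L.length := by
    ext x
    simp only [Finset.mem_range, Finset.mem_union, Finset.mem_Ioo]
    omega
  have hdisj : Disjoint (Finset.range (i+1)) (Finset.Ioo i L.length) := by
    rw [Finset.disjoint_left]
    intro x hx hx'
    simp only [Finset.mem_range] at hx
    simp only [Finset.mem_Ioo] at hx'
    omega
  unfold mfun
  rw [hsplit, Finset.filter_union,
    Finset.card_union_of_disjoint (hdisj.mono (Finset.filter_subset _ _) (Finset.filter_subset _ _)),
    Finset.filter_true_of_mem (fun x hx => by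
      simp only [Finset.mem_range] at hx
      exact lt_of_lt_of_le hj (lam_anti hsorted (by omega) hi)),
    Finset.card_range]

lemma hookLen_eq2 {L : List ℕ} (hsorted : L.Pairwise (· ≥ ·)) {i j : ℕ} (hi : i < L.length)
    (hj : j < L.getD i 0) :
    hookLen L i j = (L.getD i 0 - j) + (mfun L j - (i+1)) := by
  rw [hookLen_eq, mfun_split hsorted hi hj]
  omega

lemma hook_anti {L : List ℕ} {i j j' : ℕ} (hjj : j ≤ j') (hj' : j' < L.getD i 0) :
    hookLen L i j' + (j' - j) ≤ hookLen L i j := by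
  rw [hookLen_eq, hookLen_eq]
  have hc : ((Finset.Ioo i L.length).filter (fun k => j' < L.getD k 0)).card ≤
      ((Finset.Ioo i L.length).filter (fun k => j < L.getD k 0)).card := by
    apply Finset.card_le_card
    intro x hx
    simp only [Finset.mem_filter] at hx ⊢
    exact ⟨hx.1, by omega⟩
  omega

lemma hook_bounds {L : List ℕ} (hsorted : L.Pairwise (· ≥ ·)) (hpos : ∀ a ∈ L, 0 < a)
    {i j : ℕ} (hi : i < L.length) (hj : j < L.getD i 0) :
    1 ≤ hookLen L i j ∧ hookLen L i j ≤ bfun L i := by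
  constructor
  · rw [hookLen_eq]; omega
  · have h0 := hook_anti (Nat.zero_le j) hj
    have : hookLen L i 0 = bfun L i := by
      rw [hookLen_eq]
      unfold bfun
      rw [Finset.filter_true_of_mem (fun x hx => by
        simp only [Finset.mem_Ioo] at hx
        exact lam_pos hpos hx.2)]
      rw [Nat.card_Ioo]
      omega
    omega

lemma hook_ne_diff {L : List ℕ} (hsorted : L.Pairwise (· ≥ ·)) {i j k : ℕ}
    (hik : i < k) (hk : k < L.length) (hj : j < L.getD i 0) :
    bfun L k + hookLen L i j ≠ bfun L i := by
  have hi : i < L.length := lt_trans hik hk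
  rw [hookLen_eq2 hsorted hi hj]
  have hm1 : i < mfun L j := (mfun_iff hsorted hi).mp hj
  have hm2 : mfun L j ≤ L.length := mfun_le L j
  have hlk : L.getD k 0 ≤ L.getD i 0 := lam_anti hsorted (le_of_lt hik) hk
  unfold bfun
  by_cases hc : j < L.getD k 0
  · have := (mfun_iff hsorted hk).mp hc
    omega
  · have : ¬ k < mfun L j := fun h => hc ((mfun_iff hsorted hk).mpr h)
    omega

lemma hook_injOn {L : List ℕ} {i : ℕ} :
    Set.InjOn (hookLen L i) (Finset.range (L.getD i 0)) := by
  intro a ha b hb hab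
  simp only [Finset.coe_range, Set.mem_Iio] at ha hb
  by_contra hne
  rcases Nat.lt_or_ge a b with h | h
  · have := hook_anti (le_of_lt h) hb; omega
  · have hba : b < a := by omega
    have := hook_anti (le_of_lt hba) ha; omega

lemma row_partition {L : List ℕ} (hsorted : L.Pairwise (· ≥ ·)) (hpos : ∀ a ∈ L, 0 < a)
    {i : ℕ} (hi : i < L.length) :
    Disjoint ((Finset.range (L.getD i 0)).image (hookLen L i))
        ((Finset.Ioo i L.length).image (fun k => bfun L i - bfun L k)) ∧
      ((Finset.range (L.getD i 0)).image (hookLen L i)) ∪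
        ((Finset.Ioo i L.length).image (fun k => bfun L i - bfun L k)) =
      Finset.Icc 1 (bfun L i) := by
  have hdisj : Disjoint ((Finset.range (L.getD i 0)).image (hookLen L i))
      ((Finset.Ioo i L.length).image (fun k => bfun L i - bfun L k)) := by
    rw [Finset.disjoint_left]
    rintro x hx hx'
    simp only [Finset.mem_image, Finset.mem_range, Finset.mem_Ioo] at hx hx'
    obtain ⟨j, hj, rfl⟩ := hx
    obtain ⟨k, ⟨hik, hk⟩, heq⟩ := hx'
    have hblt := bfun_anti hsorted hik hk
    have := hook_ne_diff hsorted hik hk hj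
    omega
  refine ⟨hdisj, ?_⟩
  apply Finset.eq_of_subset_of_card_le
  · intro x hx
    simp only [Finset.mem_union, Finset.mem_image, Finset.mem_range, Finset.mem_Ioo] at hx
    simp only [Finset.mem_Icc]
    rcases hx with ⟨j, hj, rfl⟩ | ⟨k, ⟨hik, hk⟩, rfl⟩
    · exact hook_bounds hsorted hpos hi hj
    · have := bfun_anti hsorted hik hk
      omega
  · rw [Nat.card_Icc, Finset.card_union_of_disjoint hdisj,
      Finset.card_image_of_injOn hook_injOn,
      Finset.card_image_of_injOn (fun a ha b hb hab => by
        simp only [Finset.coe_Ioo, Set.mem_Ioo] at ha hb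
        have h1 := bfun_anti hsorted ha.1 ha.2
        have h2 := bfun_anti hsorted hb.1 hb.2
        rcases Nat.lt_or_ge a b with h | h
        · have := bfun_anti hsorted h hb.2; omega
        · rcases Nat.eq_or_lt_of_le h with rfl | h'
          · rfl
          · have := bfun_anti hsorted h' ha.2; omega),
      Finset.card_range, Nat.card_Ioo]
    unfold bfun
    have : L.length - 1 - i = L.length - i - 1 := by omega
    omega

lemma row_count {L : List ℕ} (hsorted : L.Pairwise (· ≥ ·)) (hpos : ∀ a ∈ L, 0 < a)
    {i : ℕ} (hi : i < L.length) {l : ℕ} (hl : 0 < l) :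
    ((Finset.range (L.getD i 0)).filter (fun j => l ∣ hookLen L i j)).card
      + ((Finset.Ioo i L.length).filter (fun k => bfun L k % l = bfun L i % l)).card
      = bfun L i / l := by
  obtain ⟨hdisj, hunion⟩ := row_partition hsorted hpos hi
  have key : (Finset.Icc 1 (bfun L i)).filter (fun x => l ∣ x) =
      (((Finset.range (L.getD i 0)).filter (fun j => l ∣ hookLen L i j)).image (hookLen L i))
      ∪ (((Finset.Ioo i L.length).filter (fun k => bfun L k % l = bfun L i % l)).image
          (fun k => bfun L i - bfun L k)) := by
    rw [← hunion, Finset.filter_union]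
    congr 1
    · rw [Finset.filter_image]
    · rw [Finset.filter_image]
      congr 1
      apply Finset.filter_congr
      intro k hk
      simp only [Finset.mem_Ioo] at hk
      have hblt := bfun_anti hsorted hk.1 hk.2
      have := Nat.modEq_iff_dvd' (le_of_lt hblt) (n := l)
      unfold Nat.ModEq at this
      rw [this]
  have hIcc : Finset.Icc 1 (bfun L i) = Finset.Ioc 0 (bfun L i) := rfl
  rw [← Nat.Ioc_filter_dvd_card_eq_div (bfun L i) l, ← hIcc, key,
    Finset.card_union_of_disjoint (hdisj.mono (Finset.image_subset_image (Finset.filter_subset _ _))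
      (Finset.image_subset_image (Finset.filter_subset _ _))),
    Finset.card_image_of_injOn (hook_injOn.mono (by
      intro x hx
      simp only [Finset.coe_filter, Set.mem_setOf_eq, Finset.mem_range] at hx
      simp only [Finset.coe_range, Set.mem_Iio]
      exact hx.1)),
    Finset.card_image_of_injOn (fun a ha b hb hab => by
      simp only [Finset.coe_filter, Set.mem_setOf_eq, Finset.mem_Ioo] at ha hb
      have h1 := bfun_anti hsorted ha.1.1 ha.1.2
      have h2 := bfun_anti hsorted hb.1.1 hb.1.2
      rcases Nat.lt_or_ge a b with h | h
      · have := bfun_anti hsorted h hb.1.2; omega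
      · rcases Nat.eq_or_lt_of_le h with rfl | h'
        · rfl
        · have := bfun_anti hsorted h' ha.1.2; omega)]

lemma pairs_choose (l : ℕ) (v : ℕ → ℕ) (hv : ∀ i, v i < l) : ∀ r : ℕ,
    ∑ i ∈ Finset.range r, ((Finset.Ioo i r).filter (fun k => v k = v i)).card
      = ∑ j ∈ Finset.range l, (((Finset.range r).filter (fun i => v i = j)).card).choose 2 := by
  intro r
  induction r with
  | zero => simp
  | succ r ih =>
    rw [Finset.sum_range_succ]
    have hIoo_last : ((Finset.Ioo r (r+1)).filter (fun k => v k = v r)).card = 0 := by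
      rw [Finset.card_eq_zero]
      apply Finset.eq_empty_of_forall_notMem
      intro x hx
      simp only [Finset.mem_filter, Finset.mem_Ioo] at hx
      omega
    have hstep : ∀ i < r, ((Finset.Ioo i (r+1)).filter (fun k => v k = v i)).card
        = ((Finset.Ioo i r).filter (fun k => v k = v i)).card
          + (if v r = v i then 1 else 0) := by
      intro i hi
      have hins : Finset.Ioo i (r+1) = insert r (Finset.Ioo i r) := by
        ext x
        simp only [Finset.mem_Ioo, Finset.mem_insert]
        omega
      rw [hins, Finset.filter_insert]
      split
      · rw [Finset.card_insert_of_notMem (fun h => by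
          simp only [Finset.mem_filter, Finset.mem_Ioo] at h; omega)]
      · omega
    rw [Finset.sum_congr rfl (fun i hi => hstep i (Finset.mem_range.mp hi)),
      Finset.sum_add_distrib, ih, hIoo_last, Nat.add_zero]
    have hcount : ∑ i ∈ Finset.range r, (if v r = v i then 1 else 0)
        = ((Finset.range r).filter (fun i => v i = v r)).card := by
      rw [Finset.card_filter]
      apply Finset.sum_congr rfl
      intro i _
      by_cases h : v i = v r
      · rw [if_pos h.symm, if_pos h]
      · rw [if_neg (fun hh => h hh.symm), if_neg h]
    rw [hcount]
    have hrhs : ∀ j ∈ Finset.range l,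
        (((Finset.range (r+1)).filter (fun i => v i = j)).card).choose 2
        = (((Finset.range r).filter (fun i => v i = j)).card).choose 2
          + (if j = v r then ((Finset.range r).filter (fun i => v i = v r)).card else 0) := by
      intro j _
      rw [Finset.range_add_one, Finset.filter_insert]
      split
      · rename_i h
        rw [Finset.card_insert_of_notMem (fun hmem => by
          simp only [Finset.mem_filter, Finset.mem_range] at hmem; omega)]
        rw [if_pos (by omega)]
        have hc : ∀ m : ℕ, (m+1).choose 2 = m.choose 2 + m := fun m => by
          rw [Nat.choose_succ_succ m 1, Nat.choose_one_right]; exact Nat.add_comm _ _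
        rw [hc]
        subst h
        omega
      · rename_i h
        rw [if_neg (by omega), Nat.add_zero]
    rw [Finset.sum_congr rfl hrhs, Finset.sum_add_distrib,
      Finset.sum_ite_eq' (Finset.range l) (v r)
        (fun _ => ((Finset.range r).filter (fun i => v i = v r)).card),
      if_pos (Finset.mem_range.mpr (hv r))]

lemma listMapRangeSum (f : ℕ → ℕ) (n : ℕ) :
    ((List.range n).map f).sum = ∑ i ∈ Finset.range n, f i := by
  induction n with
  | zero => simp
  | succ n ih => rw [List.range_succ]; simp [ih, Finset.sum_range_succ]

lemma listSumGetD (L : List ℕ) : L.sum = ∑ i ∈ Finset.range L.length, L.getD i 0 := by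
  induction L with
  | nil => simp
  | cons a L ih => simp [Finset.sum_range_succ', ih, Nat.add_comm]

lemma betaSet_eq (L : List ℕ) : betaSet L = (List.range L.length).map (bfun L) := rfl

lemma betaSet_getElem (L : List ℕ) (a : ℕ) (h : a < (betaSet L).length) :
    (betaSet L)[a] = bfun L a := by
  have h' : a < L.length := by
    have := h; rw [betaSet_eq, List.length_map, List.length_range] at this; exact this
  show ((List.range L.length).map (bfun L))[a]'(by
    rw [List.length_map, List.length_range]; exact h') = bfun L a
  simp only [List.getElem_map]
  congr 1
  exact List.getElem_range _

lemma beta_div_sum (L : List ℕ) (l : ℕ) :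
    ((betaSet L).map (· / l)).sum = ∑ i ∈ Finset.range L.length, bfun L i / l := by
  rw [betaSet_eq, List.map_map]
  exact listMapRangeSum _ _

lemma beta_filter_len (L : List ℕ) (l j : ℕ) :
    ((betaSet L).filter (fun b => b % l = j)).length
      = ((Finset.range L.length).filter (fun i => bfun L i % l = j)).card := by
  rw [listFilterCard]
  have hlen : (betaSet L).length = L.length := by
    rw [betaSet_eq, List.length_map, List.length_range]
  rw [hlen]
  apply Finset.card_bij (fun a _ => a)
  · intro a ha
    simp only [Finset.mem_filter, Finset.mem_range] at ha ⊢
    refine ⟨ha.1, ?_⟩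
    have := ha.2
    rw [(betaSet L).getD_eq_getElem 0 (by rw [hlen]; exact ha.1)] at this
    rw [betaSet_getElem L a (by rw [hlen]; exact ha.1)] at this
    simpa using this
  · intro a ha b hb h; exact h
  · intro b hb
    refine ⟨b, ?_, rfl⟩
    simp only [Finset.mem_filter, Finset.mem_range] at hb ⊢
    refine ⟨hb.1, ?_⟩
    rw [(betaSet L).getD_eq_getElem 0 (by rw [hlen]; exact hb.1),
      betaSet_getElem L b (by rw [hlen]; exact hb.1)]
    simpa using hb.2

lemma total_count {L : List ℕ} (hsorted : L.Pairwise (· ≥ ·)) (hpos : ∀ a ∈ L, 0 < a)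
    {l : ℕ} (hl : 0 < l) :
    ∑ i ∈ Finset.range L.length,
        ((Finset.range (L.getD i 0)).filter (fun j => l ∣ hookLen L i j)).card
      = lWeight l L := by
  have hrows := Finset.sum_congr rfl
    (fun i (hi : i ∈ Finset.range L.length) =>
      row_count hsorted hpos (Finset.mem_range.mp hi) hl)
    (f := fun i => ((Finset.range (L.getD i 0)).filter (fun j => l ∣ hookLen L i j)).card
      + ((Finset.Ioo i L.length).filter (fun k => bfun L k % l = bfun L i % l)).card)
  rw [Finset.sum_add_distrib] at hrows
  have hpairs := pairs_choose l (fun i => bfun L i % l) (fun i => Nat.mod_lt _ hl) L.length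
  unfold lWeight
  rw [beta_div_sum]
  have hfib : ∀ j, ((betaSet L).filter (fun b => b % l = j)).length
      = ((Finset.range L.length).filter (fun i => bfun L i % l = j)).card :=
    fun j => beta_filter_len L l j
  simp only [hfib]
  omega

lemma lWeight_eq (L : List ℕ) (l : ℕ) :
    lWeight l L = (∑ i ∈ Finset.range L.length, bfun L i / l)
      - ∑ j ∈ Finset.range l,
          (((Finset.range L.length).filter (fun i => bfun L i % l = j)).card).choose 2 := by
  unfold lWeight
  rw [beta_div_sum]
  simp only [beta_filter_len]

lemma gauss_choose (m : ℕ) : ∑ k ∈ Finset.range m, k = m.choose 2 := by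
  have := Finset.sum_range_id_mul_two m
  rw [Nat.choose_two_right]
  omega

lemma sum_bfun (L : List ℕ) :
    ∑ i ∈ Finset.range L.length, bfun L i = L.sum + L.length.choose 2 := by
  unfold bfun
  rw [Finset.sum_add_distrib, ← listSumGetD]
  congr 1
  rw [Finset.sum_range_reflect (fun i => i) L.length]
  exact gauss_choose L.length

lemma distinct_sum (S : Finset ℕ) : S.card.choose 2 ≤ ∑ x ∈ S, x := by
  induction S using Finset.induction_on_max with
  | empty => simp
  | insert a S ha ih =>
    have hnotmem : a ∉ S := fun h => lt_irrefl a (ha a h)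
    have hcard : S.card ≤ a := by
      have : S ⊆ Finset.range a := fun x hx => Finset.mem_range.mpr (ha x hx)
      simpa using Finset.card_le_card this
    rw [Finset.sum_insert hnotmem, Finset.card_insert_of_notMem hnotmem]
    have hc : (S.card + 1).choose 2 = S.card.choose 2 + S.card := by
      rw [Nat.choose_succ_succ S.card 1, Nat.choose_one_right]; exact Nat.add_comm _ _
    omega

lemma weight_bound {L : List ℕ} (hsorted : L.Pairwise (· ≥ ·)) (hpos : ∀ a ∈ L, 0 < a)
    {l : ℕ} (hl : 0 < l) : l * lWeight l L ≤ L.sum := by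
  classical
  set r := L.length with hr
  set m : ℕ → ℕ := fun j => ((Finset.range r).filter (fun i => bfun L i % l = j)).card with hm
  set S := ∑ i ∈ Finset.range r, bfun L i / l with hS
  set P := ∑ j ∈ Finset.range l, (m j).choose 2 with hP
  have hw : lWeight l L = S - P := lWeight_eq L l
  -- (b) sum of beta
  have hb : ∑ i ∈ Finset.range r, bfun L i = l * S + ∑ i ∈ Finset.range r, bfun L i % l := by
    rw [hS, Finset.mul_sum, ← Finset.sum_add_distrib]
    apply Finset.sum_congr rfl
    intro i _
    exact (Nat.div_add_mod (bfun L i) l).symm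
  -- (a)
  have ha : ∑ i ∈ Finset.range r, bfun L i = L.sum + r.choose 2 := sum_bfun L
  -- (c) fiberwise mod-sum
  have hmaps : ∀ i ∈ Finset.range r, bfun L i % l ∈ Finset.range l :=
    fun i _ => Finset.mem_range.mpr (Nat.mod_lt _ hl)
  have hc : ∑ i ∈ Finset.range r, bfun L i % l = ∑ j ∈ Finset.range l, j * m j := by
    rw [← Finset.sum_fiberwise_of_maps_to hmaps (fun i => bfun L i % l)]
    apply Finset.sum_congr rfl
    intro j _
    rw [hm]
    rw [Finset.sum_congr rfl (fun i hi => (Finset.mem_filter.mp hi).2)]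
    simp [Nat.mul_comm]
  -- (d)
  have hd : r = ∑ j ∈ Finset.range l, m j := by
    rw [hm]
    simpa using Finset.card_eq_sum_card_fiberwise hmaps
  -- (e) core beta set
  set CB : Finset ℕ := (Finset.range l).biUnion
    (fun j => (Finset.range (m j)).image (fun k => j + l * k)) with hCB
  have hdisjCB : ∀ x ∈ Finset.range l, ∀ y ∈ Finset.range l, x ≠ y →
      Disjoint ((Finset.range (m x)).image (fun k => x + l * k))
        ((Finset.range (m y)).image (fun k => y + l * k)) := by
    intro x hx y hy hxy
    rw [Finset.disjoint_left]
    rintro z hz hz'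
    simp only [Finset.mem_image, Finset.mem_range] at hz hz' hx hy
    obtain ⟨k, hk, rfl⟩ := hz
    obtain ⟨k', hk', heq⟩ := hz'
    apply hxy
    have e1 : (x + l * k) % l = x := by
      rw [Nat.add_mul_mod_self_left, Nat.mod_eq_of_lt hx]
    have e2 : (y + l * k') % l = y := by
      rw [Nat.add_mul_mod_self_left, Nat.mod_eq_of_lt hy]
    rw [← e1, ← e2, heq]
  have hinj : ∀ j, Function.Injective (fun k => j + l * k) := by
    intro j a b hab
    simp only at hab
    have : l * a = l * b := by omega
    exact Nat.eq_of_mul_eq_mul_left hl this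
  have hcardCB : CB.card = r := by
    rw [hCB, Finset.card_biUnion hdisjCB]
    rw [hd]
    apply Finset.sum_congr rfl
    intro j _
    rw [Finset.card_image_of_injective _ (hinj j), Finset.card_range]
  have hsumCB : ∑ x ∈ CB, x = ∑ j ∈ Finset.range l, (j * m j + l * (m j).choose 2) := by
    rw [hCB, Finset.sum_biUnion]
    · apply Finset.sum_congr rfl
      intro j _
      rw [Finset.sum_image (fun a _ b _ h => hinj j h)]
      rw [Finset.sum_add_distrib, ← Finset.mul_sum, gauss_choose]
      simp [Finset.mul_sum, Nat.mul_comm]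
    · intro x hx y hy hxy
      exact hdisjCB x hx y hy hxy
  have hf : r.choose 2 ≤ ∑ x ∈ CB, x := hcardCB ▸ distinct_sum CB
  -- assemble
  rw [hw]
  rcases le_or_gt S P with hSP | hSP
  · have h0 : S - P = 0 := by omega
    rw [h0]
    simp
  · have hww : l * (S - P) + l * P = l * S := by rw [← Nat.mul_add]; congr 1; omega
    have hPsum : l * P = ∑ j ∈ Finset.range l, l * ((m j).choose 2) := by
      rw [hP, Finset.mul_sum]
    have hsplit : ∑ j ∈ Finset.range l, (j * m j + l * (m j).choose 2)
        = ∑ j ∈ Finset.range l, j * m j + ∑ j ∈ Finset.range l, l * ((m j).choose 2) :=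
      Finset.sum_add_distrib
    omega

lemma fact_card {p : ℕ} (hp : p.Prime) {h n : ℕ} (h1 : 1 ≤ h) (h2 : h ≤ n) :
    h.factorization p = ((Finset.Icc 1 n).filter (fun t => p ^ t ∣ h)).card := by
  have hne : h ≠ 0 := by omega
  have hvlt : h.factorization p < h := Nat.factorization_lt p hne
  have hfilt : (Finset.Icc 1 n).filter (fun t => p ^ t ∣ h)
      = Finset.Icc 1 (h.factorization p) := by
    ext t
    simp only [Finset.mem_filter, Finset.mem_Icc]
    rw [Nat.Prime.pow_dvd_iff_le_factorization hp hne]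
    omega
  rw [hfilt, Nat.card_Icc]
  omega

lemma bfun_le_sum {L : List ℕ} (hsorted : L.Pairwise (· ≥ ·)) (hpos : ∀ a ∈ L, 0 < a)
    {i : ℕ} (hi : i < L.length) : bfun L i ≤ L.sum := by
  have hb0 : bfun L i ≤ bfun L 0 := by
    rcases Nat.eq_zero_or_pos i with rfl | h
    · exact le_rfl
    · exact le_of_lt (bfun_anti hsorted h hi)
  have h0r : 0 < L.length := by omega
  have hsum : L.sum = ∑ k ∈ Finset.range L.length, L.getD k 0 := listSumGetD L
  have hpeel : ∑ k ∈ Finset.range L.length, L.getD k 0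
      = L.getD 0 0 + ∑ k ∈ Finset.range (L.length - 1), L.getD (k+1) 0 := by
    obtain ⟨r', hr'⟩ : ∃ r', L.length = r' + 1 := ⟨L.length - 1, by omega⟩
    rw [hr']
    rw [Finset.sum_range_succ']
    simp [Nat.add_comm]
  have hones : ∀ k ∈ Finset.range (L.length - 1), 1 ≤ L.getD (k+1) 0 :=
    fun k hk => lam_pos hpos (by simp only [Finset.mem_range] at hk; omega)
  have : L.length - 1 ≤ ∑ k ∈ Finset.range (L.length - 1), L.getD (k+1) 0 := by
    calc L.length - 1 = ∑ _k ∈ Finset.range (L.length - 1), 1 := by simp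
    _ ≤ _ := Finset.sum_le_sum hones
  unfold bfun at *
  omega

lemma hook_factorization {L : List ℕ} (hsorted : L.Pairwise (· ≥ ·)) (hpos : ∀ a ∈ L, 0 < a)
    {p : ℕ} (hp : p.Prime) :
    (∏ i ∈ Finset.range L.length, ∏ j ∈ Finset.range (L.getD i 0),
        hookLen L i j).factorization p
      = ∑ t ∈ Finset.Icc 1 L.sum, lWeight (p ^ t) L := by
  have hne : ∀ i ∈ Finset.range L.length, ∀ j ∈ Finset.range (L.getD i 0),
      hookLen L i j ≠ 0 := by
    intro i hi j hj
    have := (hook_bounds hsorted hpos (Finset.mem_range.mp hi) (Finset.mem_range.mp hj)).1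
    omega
  have hinne : ∀ i ∈ Finset.range L.length,
      (∏ j ∈ Finset.range (L.getD i 0), hookLen L i j) ≠ 0 :=
    fun i hi => Finset.prod_ne_zero_iff.mpr (hne i hi)
  rw [Nat.factorization_prod hinne]
  rw [Finset.sum_apply']
  have hinner : ∀ i ∈ Finset.range L.length,
      (∏ j ∈ Finset.range (L.getD i 0), hookLen L i j).factorization p
      = ∑ j ∈ Finset.range (L.getD i 0), (hookLen L i j).factorization p := by
    intro i hi
    rw [Nat.factorization_prod (hne i hi), Finset.sum_apply']
  rw [Finset.sum_congr rfl hinner]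
  have hterm : ∀ i ∈ Finset.range L.length, ∀ j ∈ Finset.range (L.getD i 0),
      (hookLen L i j).factorization p
      = ∑ t ∈ Finset.Icc 1 L.sum, (if p ^ t ∣ hookLen L i j then 1 else 0) := by
    intro i hi j hj
    rw [fact_card hp (hook_bounds hsorted hpos (Finset.mem_range.mp hi)
        (Finset.mem_range.mp hj)).1
      (le_trans (hook_bounds hsorted hpos (Finset.mem_range.mp hi)
        (Finset.mem_range.mp hj)).2
        (bfun_le_sum hsorted hpos (Finset.mem_range.mp hi))),
      Finset.card_filter]
  rw [Finset.sum_congr rfl (fun i hi => Finset.sum_congr rfl (hterm i hi))]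
  rw [Finset.sum_congr rfl (fun i _ => Finset.sum_comm), Finset.sum_comm]
  apply Finset.sum_congr rfl
  intro t ht
  have hlpos : 0 < p ^ t := Nat.pow_pos (n := t) hp.pos
  rw [← total_count hsorted hpos hlpos]
  apply Finset.sum_congr rfl
  intro i _
  rw [Finset.card_filter]

lemma factorial_factorization (n : ℕ) {p : ℕ} (hp : p.Prime) :
    (n.factorial).factorization p = ∑ t ∈ Finset.Icc 1 n, n / p ^ t := by
  have hfact : (∏ x ∈ Finset.Icc 1 n, x) = n.factorial := by
    rw [← Finset.prod_Ico_id_eq_factorial, Finset.Ico_add_one_right_eq_Icc]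
  rw [← hfact]
  have hne : ∀ x ∈ Finset.Icc 1 n, x ≠ 0 := by
    intro x hx
    simp only [Finset.mem_Icc] at hx
    omega
  rw [Nat.factorization_prod hne, Finset.sum_apply']
  have hterm : ∀ x ∈ Finset.Icc 1 n, (Nat.factorization x) p
      = ∑ t ∈ Finset.Icc 1 n, (if p ^ t ∣ x then 1 else 0) := by
    intro x hx
    simp only [Finset.mem_Icc] at hx
    rw [fact_card hp hx.1 hx.2, Finset.card_filter]
  rw [Finset.sum_congr rfl hterm, Finset.sum_comm]
  apply Finset.sum_congr rfl
  intro t ht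
  rw [← Finset.card_filter]
  have hIcc : Finset.Icc 1 n = Finset.Ioc 0 n := rfl
  rw [hIcc, Nat.Ioc_filter_dvd_card_eq_div]

end HookAux

/-- Hook length formula factorization: `dim S^λ = n! / ∏ h_c` and its prime
factorization is `∏_{p, r ≥ 1} p^{⌊n/p^r⌋ - wt_{p^r}(λ)}`, i.e. the exponent
of each prime `p` in `dim S^λ` is `∑_{r ≥ 1} (⌊n/p^r⌋ - wt_{p^r}(λ))`. -/
theorem statement4 (n : ℕ) (L : List ℕ) (hsorted : L.Pairwise (· ≥ ·))
    (hpos : ∀ a ∈ L, 0 < a) (hsum : L.sum = n) :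
    (∏ i ∈ Finset.range L.length, ∏ j ∈ Finset.range (L.getD i 0), hookLen L i j)
      ∣ n.factorial ∧
    ∀ p : ℕ, p.Prime →
      (n.factorial /
        ∏ i ∈ Finset.range L.length, ∏ j ∈ Finset.range (L.getD i 0),
          hookLen L i j).factorization p
        = ∑ r ∈ Finset.Icc 1 n, (n / p ^ r - lWeight (p ^ r) L) := by
  set H := ∏ i ∈ Finset.range L.length, ∏ j ∈ Finset.range (L.getD i 0), hookLen L i j with hHdef
  have hHne : H ≠ 0 := by
    rw [hHdef]
    rw [Finset.prod_ne_zero_iff]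
    intro i hi
    rw [Finset.prod_ne_zero_iff]
    intro j hj
    have := (hook_bounds hsorted hpos (Finset.mem_range.mp hi) (Finset.mem_range.mp hj)).1
    omega
  have hfacH : ∀ p : ℕ, p.Prime →
      H.factorization p = ∑ t ∈ Finset.Icc 1 n, lWeight (p ^ t) L := by
    intro p hp
    rw [hHdef, hook_factorization hsorted hpos hp, hsum]
  have hwle : ∀ p : ℕ, p.Prime → ∀ t, 1 ≤ t → lWeight (p ^ t) L ≤ n / p ^ t := by
    intro p hp t _
    have hl : 0 < p ^ t := Nat.pow_pos (n := t) hp.pos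
    rw [Nat.le_div_iff_mul_le hl]
    have hwb := weight_bound hsorted hpos hl
    rw [hsum] at hwb
    rw [Nat.mul_comm]
    exact hwb
  have hnfne : n.factorial ≠ 0 := Nat.factorial_ne_zero n
  have hdvd : H ∣ n.factorial := by
    rw [← Nat.factorization_le_iff_dvd hHne hnfne]
    rw [Finsupp.le_def]
    intro q
    by_cases hq : q.Prime
    · rw [hfacH q hq, factorial_factorization n hq]
      exact Finset.sum_le_sum (fun t ht => hwle q hq t (Finset.mem_Icc.mp ht).1)
    · rw [Nat.factorization_eq_zero_of_not_prime _ hq]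
      exact Nat.zero_le _
  refine ⟨hdvd, ?_⟩
  intro p hp
  rw [Nat.factorization_div hdvd]
  rw [Finsupp.tsub_apply]
  rw [hfacH p hp, factorial_factorization n hp]
  rw [Finset.sum_tsub_distrib _ (fun t ht => hwle p hp t (Finset.mem_Icc.mp ht).1)]
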